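/- Let C = {(z, z³) : z ∈ GF(2^m)} ⊆ GF(2^m) × GF(2^m), identified with a set of 0-1 vectors of length 2m via coefficient vectors. Then C is a Sidon set: for any a, b, c, d ∈ C, if a + b = c + d (addition of integer vectors over ℕ, i.e., componentwise integer addition of the 0-1 coefficient vectors), then {a, b} = {c, d}. -/

import Mathlib

/-- Lindström: the cubic parabola `{(z, z³) : z ∈ GF(2^m)}`, with field elements
identified with their 0-1 coordinate vectors, is a Sidon set with respect to
componentwise integer addition. -/
theorem stmt16 (m : ℕ) (hm : 0 < m)
    (β : Module.Basis (Fin m) (ZMod 2) (GaloisField 2 m))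
    (z w u v : GaloisField 2 m)
    (h1 : ∀ i, (β.repr z i).val + (β.repr w i).val
              = (β.repr u i).val + (β.repr v i).val)
    (h3 : ∀ i, (β.repr (z ^ 3) i).val + (β.repr (w ^ 3) i).val
              = (β.repr (u ^ 3) i).val + (β.repr (v ^ 3) i).val) :
    (z = u ∧ w = v) ∨ (z = v ∧ w = u) := by
  have htwo : (2 : GaloisField 2 m) = 0 := by
    have := CharP.cast_eq_zero (GaloisField 2 m) 2
    exact_mod_cast this
  -- from coordinatewise ℕ-sums, deduce sums in the field
  have hs : z + w = u + v := by
    apply β.repr.injective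
    ext i
    rw [map_add, map_add]
    simp only [Finsupp.add_apply]
    have := congrArg (Nat.cast : ℕ → ZMod 2) (h1 i)
    push_cast at this
    simpa [ZMod.natCast_val, ZMod.cast_id] using this
  have hc : z ^ 3 + w ^ 3 = u ^ 3 + v ^ 3 := by
    apply β.repr.injective
    ext i
    rw [map_add, map_add]
    simp only [Finsupp.add_apply]
    have := congrArg (Nat.cast : ℕ → ZMod 2) (h3 i)
    push_cast at this
    simpa [ZMod.natCast_val, ZMod.cast_id] using this
  have hv : v = z + w - u := by linear_combination -hs
  subst hv
  have key : (z + w) * (z - u) * (z - (z + w - u)) = 0 := by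
    linear_combination hc - ((z + w) * ((z + w) * u - u ^ 2 - z * w)) * htwo
  rcases mul_eq_zero.mp key with key1 | h2
  · rcases mul_eq_zero.mp key1 with h0 | hzu
    · -- z + w = 0, so w = z; then from h1, z = u
      have hw : w = z := by linear_combination h0 - z * htwo
      subst hw
      have hzu : w = u := by
        apply β.repr.injective
        ext i
        apply ZMod.val_injective
        have hi := h1 i
        have hv2 : β.repr (w + w - u) i = β.repr u i := by
          have : w + w - u = u := by linear_combination (w - u) * htwo
          rw [this]
        rw [hv2] at hi
        omega
      exact Or.inl ⟨hzu, by linear_combination -hzu⟩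
    · -- z = u, so w = v
      refine Or.inl ⟨by linear_combination hzu, by linear_combination -hzu⟩
  · -- z = v, so w = u
    refine Or.inr ⟨by linear_combination h2, by linear_combination -h2⟩
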